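/- (Taylor's theorem for logarithmic formal series, e^{y·d/dx} f(x) = f(x+y), in coefficient form.) For every f : ℂ × ℂ → W, every k ∈ ℕ and all n, m ∈ ℂ, (D^k f)(n,m) = k! • ∑_{j=0}^{k} ∑_{b=j}^{k} binom(m+j, j) · c_{j,b} · binom(n+k, k−b) • f(n+k, m+j), where c_{j,b} = ∑ (−1)^{b−j}/(i_1 ⋯ i_j) ∈ ℚ, the sum ranging over all j-tuples (i_1,…,i_j) of positive integers with i_1 + ⋯ + i_j = b (so c_{0,0} = 1 and c_{0,b} = 0 for b > 0), and D^k denotes the k-fold iterate of D. The right-hand side is exactly k! times the coefficient of x^n (log x)^m y^k in the substituted series f(x+y) := ∑_{N,M} f(N,M) (x+y)^N (log x + log(1+y/x))^M expanded by the binomial expansion convention, with log(1+u) = ∑_{i≥1} ((−1)^{i−1}/i) u^i. -/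

import Mathlib

/-- The generalized binomial coefficient `binom(z, j) = z(z-1)⋯(z-j+1)/j!` for `z : ℂ`. -/
noncomputable def cchoose (z : ℂ) (j : ℕ) : ℂ :=
  (∏ s ∈ Finset.range j, (z - (s : ℂ))) / (j.factorial : ℂ)

/-- The coefficient `c_{j,b} = ∑_{i₁+⋯+i_j=b, iₛ ≥ 1} (-1)^{b-j}/(i₁⋯i_j) ∈ ℚ`. -/
noncomputable def cjb (j b : ℕ) : ℚ :=
  ∑ i ∈ (Finset.Nat.antidiagonalTuple j b).filter (fun i => ∀ s, 0 < i s),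
    (-1 : ℚ) ^ (b - j) / ∏ s, (i s : ℚ)

open PowerSeries Finset

lemma coeff_derivativeFun' (f : PowerSeries ℚ) (n : ℕ) :
    PowerSeries.coeff n f.derivativeFun = PowerSeries.coeff (n + 1) f * (n + 1) :=
  PowerSeries.coeff_derivative f n

noncomputable def pser : PowerSeries ℚ := PowerSeries.mk fun i => if i = 0 then 0 else (-1:ℚ)^(i-1)/i

lemma coeff_pow_tuple (φ : PowerSeries ℚ) (j b : ℕ) :
    PowerSeries.coeff (R := ℚ) b (φ^j) =
      ∑ i ∈ Finset.Nat.antidiagonalTuple j b, ∏ s, PowerSeries.coeff (R := ℚ) (i s) φ := by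
  induction j generalizing b with
  | zero =>
    cases b with
    | zero => simp
    | succ b => simp [PowerSeries.coeff_one]
  | succ j ih =>
    rw [pow_succ', PowerSeries.coeff_mul]
    simp_rw [ih, Finset.mul_sum]
    rw [Finset.sum_sigma']
    refine Finset.sum_nbij' (i := fun p => Fin.cons p.1.1 p.2)
      (j := fun t => ⟨(t 0, ∑ s, t (Fin.succ s)), Fin.tail t⟩) ?_ ?_ ?_ ?_ ?_
    · rintro ⟨⟨x, y⟩, i⟩ h
      simp only [Finset.mem_sigma, Finset.HasAntidiagonal.mem_antidiagonal, Finset.Nat.mem_antidiagonalTuple] at h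
      simp only [Finset.Nat.mem_antidiagonalTuple, Fin.sum_univ_succ, Fin.cons_zero, Fin.cons_succ]
      rw [h.2, h.1]
    · intro t h
      simp only [Finset.Nat.mem_antidiagonalTuple] at h
      simp only [Finset.mem_sigma, Finset.HasAntidiagonal.mem_antidiagonal, Finset.Nat.mem_antidiagonalTuple]
      exact ⟨by rw [← h, Fin.sum_univ_succ], rfl⟩
    · rintro ⟨⟨x, y⟩, i⟩ h
      simp only [Finset.mem_sigma, Finset.HasAntidiagonal.mem_antidiagonal, Finset.Nat.mem_antidiagonalTuple] at h
      have hy : (∑ s, (Fin.cons x i : Fin (j+1) → ℕ) (Fin.succ s)) = y := by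
        simp [Fin.cons_succ, h.2]
      simp only [Fin.cons_zero, Fin.tail_cons, hy]
    · intro t h
      simp [Fin.cons_self_tail]
    · rintro ⟨⟨x, y⟩, i⟩ h
      simp [Fin.prod_univ_succ]

lemma cjb_eq (j b : ℕ) : cjb j b = PowerSeries.coeff (R := ℚ) b (pser ^ j) := by
  rw [coeff_pow_tuple, cjb]
  refine Eq.trans ?_ (Finset.sum_filter_of_ne (p := fun i : Fin j → ℕ => ∀ s, 0 < i s)
    (fun i hi hne => by
      by_contra hni
      apply hne
      simp only [not_forall, not_lt, Nat.le_zero] at hni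
      obtain ⟨s, hs⟩ := hni
      apply Finset.prod_eq_zero (Finset.mem_univ s)
      rw [hs, pser, PowerSeries.coeff_mk, if_pos rfl]))
  apply Finset.sum_congr rfl
  intro i hi
  simp only [Finset.mem_filter] at hi
  have hpos := hi.2
  have hsum : ∑ s, i s = b := Finset.Nat.mem_antidiagonalTuple.mp hi.1
  have hc : ∀ s, PowerSeries.coeff (R := ℚ) (i s) pser = (-1:ℚ)^(i s - 1) / (i s) := by
    intro s
    rw [pser, PowerSeries.coeff_mk, if_neg (hpos s).ne']
  rw [Finset.prod_congr rfl (fun s _ => hc s), Finset.prod_div_distrib,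
    Finset.prod_pow_eq_pow_sum]
  have hexp : ∑ s, (i s - 1) = b - j := by
    rw [Finset.sum_tsub_distrib _ (fun s _ => hpos s)]
    simp [hsum]
  rw [hexp]

lemma deriv_pser : (1 + PowerSeries.X) * PowerSeries.derivativeFun pser = (1 : PowerSeries ℚ) := by
  ext d
  rw [add_mul, one_mul, map_add]
  have hd : ∀ e : ℕ, PowerSeries.coeff (R := ℚ) e (PowerSeries.derivativeFun pser) = (-1:ℚ)^e := by
    intro e
    rw [coeff_derivativeFun', pser, PowerSeries.coeff_mk, if_neg (Nat.succ_ne_zero e)]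
    have : ((e+1 : ℕ) : ℚ) ≠ 0 := by positivity
    field_simp
    simp only [Nat.add_sub_cancel]
    push_cast
    ring
  cases d with
  | zero =>
    simp only [hd, pow_zero, PowerSeries.coeff_one, if_pos rfl]
    rw [PowerSeries.coeff_zero_eq_constantCoeff, map_mul, PowerSeries.constantCoeff_X]
    simp
  | succ d =>
    rw [PowerSeries.coeff_succ_X_mul, hd, hd, PowerSeries.coeff_one, if_neg (Nat.succ_ne_zero d)]
    rw [pow_succ]
    ring

lemma deriv_pser_pow (j : ℕ) :
    PowerSeries.derivativeFun (pser^(j+1)) = (j+1 : ℕ) • (pser^j * PowerSeries.derivativeFun pser) := by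
  induction j with
  | zero => simp
  | succ j ih =>
    rw [pow_succ', PowerSeries.derivativeFun_mul, ih]
    simp only [smul_eq_mul, nsmul_eq_mul]
    push_cast
    ring

lemma cjb_zero_succ (b : ℕ) : cjb 0 (b+1) = 0 := by
  simp [cjb]

lemma cjb_zero_zero : cjb 0 0 = 1 := by
  simp [cjb]

lemma cjb_rec (j b : ℕ) :
    (b:ℚ) * cjb j b + ((b:ℚ)+1) * cjb j (b+1) = (j:ℚ) * cjb (j-1) b := by
  cases j with
  | zero =>
    rw [cjb_zero_succ]
    cases b with
    | zero => simp
    | succ b => rw [cjb_zero_succ]; simp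
  | succ j =>
    have h2 : (1 + PowerSeries.X) * PowerSeries.derivativeFun (pser^(j+1))
        = ((j:PowerSeries ℚ)+1) * (pser^j) := by
      rw [deriv_pser_pow, nsmul_eq_mul,
        show ((j+1:ℕ) : PowerSeries ℚ) = ((j:PowerSeries ℚ)+1) by push_cast; ring,
        show (1 + PowerSeries.X) * (((j:PowerSeries ℚ)+1) * (pser^j * PowerSeries.derivativeFun pser))
          = ((j:PowerSeries ℚ)+1) * pser^j * ((1 + PowerSeries.X) * PowerSeries.derivativeFun pser)
          by push_cast; ring,
        deriv_pser, mul_one]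
    have key := congrArg (PowerSeries.coeff (R := ℚ) b) h2
    rw [add_mul, one_mul, map_add, coeff_derivativeFun'] at key
    have hc : PowerSeries.coeff (R := ℚ) b (((j:PowerSeries ℚ)+1) * pser^j)
        = ((j:ℚ)+1) * PowerSeries.coeff (R := ℚ) b (pser^j) := by
      have : ((j:PowerSeries ℚ)+1) = PowerSeries.C (R := ℚ) ((j:ℚ)+1) := by
        push_cast
        simp [map_add, map_natCast]
      rw [this, PowerSeries.coeff_C_mul]
    rw [hc] at key
    simp only [Nat.succ_sub_one, Nat.cast_succ]
    rw [cjb_eq, cjb_eq, cjb_eq]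
    cases b with
    | zero =>
      rw [show ((PowerSeries.X : PowerSeries ℚ) * PowerSeries.derivativeFun (pser ^ (j + 1)))
          = PowerSeries.X * PowerSeries.derivativeFun (pser ^ (j + 1)) from rfl] at key
      have hx : PowerSeries.coeff (R := ℚ) 0
          (PowerSeries.X * PowerSeries.derivativeFun (pser ^ (j + 1))) = 0 := by
        rw [PowerSeries.coeff_zero_eq_constantCoeff, map_mul, PowerSeries.constantCoeff_X, zero_mul]
      rw [hx, add_zero] at key
      push_cast at key ⊢
      linear_combination key
    | succ b =>
      rw [PowerSeries.coeff_succ_X_mul, coeff_derivativeFun'] at key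
      push_cast at key ⊢
      linear_combination key

lemma cjb_eq_zero_of_lt {j b : ℕ} (h : b < j) : cjb j b = 0 := by
  rw [cjb]
  have he : (Finset.Nat.antidiagonalTuple j b).filter (fun i => ∀ s, 0 < i s) = ∅ := by
    refine Finset.eq_empty_of_forall_notMem (fun i hi => ?_)
    simp only [Finset.mem_filter, Finset.Nat.mem_antidiagonalTuple] at hi
    have hj : (j:ℕ) ≤ b := by
      calc j = ∑ _s : Fin j, 1 := by simp
      _ ≤ ∑ s, i s := Finset.sum_le_sum (fun s _ => hi.2 s)
      _ = b := hi.1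
    omega
  rw [he, Finset.sum_empty]

lemma cchoose_zero (z : ℂ) : cchoose z 0 = 1 := by simp [cchoose]

lemma cchoose_succ (z : ℂ) (a : ℕ) : ((a:ℂ)+1) * cchoose z (a+1) = (z - a) * cchoose z a := by
  rw [cchoose, cchoose, Finset.prod_range_succ, Nat.factorial_succ]
  have ha : ((a : ℕ):ℂ) + 1 ≠ 0 := by
    have := Nat.cast_nonneg (α := ℝ) a
    intro hc
    have : ((a:ℂ)+1).re = 0 := by rw [hc]; rfl
    simp at this
    norm_num at this
    nlinarith [Nat.cast_nonneg (α := ℝ) a]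
  have hf : ((a.factorial : ℕ):ℂ) ≠ 0 := Nat.cast_ne_zero.2 a.factorial_ne_zero
  push_cast
  field_simp

lemma key (k j : ℕ) (n : ℂ) :
    ((k:ℂ)+1) * ∑ b ∈ Finset.range (k+2), ((cjb j b : ℚ):ℂ) * cchoose (n+k+1) (k+1-b)
    = (n+1) * ∑ b ∈ Finset.range (k+1), ((cjb j b : ℚ):ℂ) * cchoose (n+k+1) (k-b)
      + (j:ℂ) * ∑ b ∈ Finset.range (k+1), ((cjb (j-1) b : ℚ):ℂ) * cchoose (n+k+1) (k-b) := by
  have step1 : ((k:ℂ)+1) * ∑ b ∈ Finset.range (k+2), ((cjb j b : ℚ):ℂ) * cchoose (n+k+1) (k+1-b)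
      = (∑ b ∈ Finset.range (k+2), ((k+1-b:ℕ):ℂ) * (((cjb j b : ℚ):ℂ) * cchoose (n+k+1) (k+1-b)))
        + ∑ b ∈ Finset.range (k+2), (b:ℂ) * (((cjb j b : ℚ):ℂ) * cchoose (n+k+1) (k+1-b)) := by
    rw [Finset.mul_sum, ← Finset.sum_add_distrib]
    refine Finset.sum_congr rfl (fun b hb => ?_)
    have hb' : b ≤ k+1 := by
      have := Finset.mem_range.mp hb; omega
    have hcast : ((k+1-b:ℕ):ℂ) = ((k:ℂ)+1) - b := by
      rw [Nat.cast_sub hb']; push_cast; ring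
    rw [hcast]; ring
  have stepS1 : (∑ b ∈ Finset.range (k+2), ((k+1-b:ℕ):ℂ) * (((cjb j b : ℚ):ℂ) * cchoose (n+k+1) (k+1-b)))
      = ∑ b ∈ Finset.range (k+1), ((n+1+b) * ((cjb j b : ℚ):ℂ)) * cchoose (n+k+1) (k-b) := by
    rw [Finset.sum_range_succ]
    simp only [Nat.sub_self, Nat.cast_zero, zero_mul, add_zero]
    refine Finset.sum_congr rfl (fun b hb => ?_)
    have hb' : b ≤ k := by have := Finset.mem_range.mp hb; omega
    have h1 : k+1-b = (k-b)+1 := by omega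
    have h2 : ((k-b:ℕ):ℂ) = (k:ℂ) - b := by rw [Nat.cast_sub hb']
    rw [h1]
    have := cchoose_succ (n+k+1) (k-b)
    calc ((((k-b)+1 : ℕ)):ℂ) * (((cjb j b : ℚ):ℂ) * cchoose (n+k+1) ((k-b)+1))
        = ((cjb j b : ℚ):ℂ) * ((((k-b):ℕ):ℂ)+1) * cchoose (n+k+1) ((k-b)+1) := by push_cast; ring
      _ = ((cjb j b : ℚ):ℂ) * ((n+k+1 - ((k-b):ℕ)) * cchoose (n+k+1) (k-b)) := by
            rw [mul_assoc, cchoose_succ]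
      _ = ((n+1+b) * ((cjb j b : ℚ):ℂ)) * cchoose (n+k+1) (k-b) := by rw [h2]; ring
  have stepS2 : (∑ b ∈ Finset.range (k+2), (b:ℂ) * (((cjb j b : ℚ):ℂ) * cchoose (n+k+1) (k+1-b)))
      = ∑ b ∈ Finset.range (k+1), (((b:ℂ)+1) * ((cjb j (b+1) : ℚ):ℂ)) * cchoose (n+k+1) (k-b) := by
    rw [Finset.sum_range_succ']
    simp only [Nat.cast_zero, zero_mul, add_zero]
    refine Finset.sum_congr rfl (fun b hb => ?_)
    have h1 : k+1-(b+1) = k-b := by omega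
    rw [h1]
    push_cast
    ring
  rw [step1, stepS1, stepS2, ← Finset.sum_add_distrib, Finset.mul_sum, Finset.mul_sum,
    ← Finset.sum_add_distrib]
  refine Finset.sum_congr rfl (fun b hb => ?_)
  have hrec : (b:ℂ) * ((cjb j b : ℚ):ℂ) + ((b:ℂ)+1) * ((cjb j (b+1) : ℚ):ℂ)
      = (j:ℂ) * ((cjb (j-1) b : ℚ):ℂ) := by
    have := cjb_rec j b
    have h2 : (((b:ℚ) * cjb j b + ((b:ℚ)+1) * cjb j (b+1) : ℚ)) = ((j:ℚ) * cjb (j-1) b) := this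
    exact_mod_cast congrArg (fun q : ℚ => (q : ℂ)) h2
  calc ((n+1+b) * ((cjb j b : ℚ):ℂ)) * cchoose (n+k+1) (k-b)
        + (((b:ℂ)+1) * ((cjb j (b+1) : ℚ):ℂ)) * cchoose (n+k+1) (k-b)
      = ((n+1) * ((cjb j b : ℚ):ℂ)
          + ((b:ℂ) * ((cjb j b : ℚ):ℂ) + ((b:ℂ)+1) * ((cjb j (b+1) : ℚ):ℂ))) * cchoose (n+k+1) (k-b) := by
        ring
    _ = (n+1) * (((cjb j b : ℚ):ℂ) * cchoose (n+k+1) (k-b))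
          + (j:ℂ) * (((cjb (j-1) b : ℚ):ℂ) * cchoose (n+k+1) (k-b)) := by rw [hrec]; ring

/-- The formal derivative `d/dx` on `W{x, log x}`, in coefficient form. -/
def Dop (W : Type*) [AddCommGroup W] [Module ℂ W] (f : ℂ × ℂ → W) : ℂ × ℂ → W :=
  fun p => (p.1 + 1) • f (p.1 + 1, p.2) + (p.2 + 1) • f (p.1 + 1, p.2 + 1)

theorem log_taylor_range (W : Type*) [AddCommGroup W] [Module ℂ W]
    (f : ℂ × ℂ → W) : ∀ (k : ℕ) (n m : ℂ),
    (Dop W)^[k] f (n, m) =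
      k.factorial • ∑ j ∈ Finset.range (k + 1),
        (cchoose (m + (j : ℂ)) j *
          ∑ b ∈ Finset.range (k + 1), ((cjb j b : ℚ) : ℂ) * cchoose (n + (k : ℂ)) (k - b)) •
          f (n + (k : ℂ), m + (j : ℂ)) := by
  intro k
  induction k with
  | zero =>
    intro n m
    simp [cchoose_zero, cjb_zero_zero]
  | succ k ih =>
    intro n m
    have hDop : (Dop W)^[k+1] f (n, m)
        = (n+1) • ((Dop W)^[k] f (n+1, m)) + (m+1) • ((Dop W)^[k] f (n+1, m+1)) := by
      rw [Function.iterate_succ_apply']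
      rfl
    rw [hDop, ih (n+1) m, ih (n+1) (m+1)]
    have hz : n + 1 + (k:ℂ) = n + (k:ℂ) + 1 := by ring
    have hz2 : n + ((k+1:ℕ):ℂ) = n + (k:ℂ) + 1 := by push_cast; ring
    have hm : ∀ j : ℕ, m + 1 + (j:ℂ) = m + (j:ℂ) + 1 := fun j => by ring
    simp only [hz, hz2, hm]
    simp only [Finset.smul_sum]
    simp only [← Nat.cast_smul_eq_nsmul ℂ]
    simp only [smul_smul]
    have hext : ∑ j ∈ Finset.range (k + 1),
        ((n + 1) * ((k.factorial:ℂ) *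
          (cchoose (m + (j:ℂ)) j *
            ∑ b ∈ Finset.range (k + 1), ((cjb j b : ℚ):ℂ) * cchoose (n + (k:ℂ) + 1) (k - b)))) •
          f (n + (k:ℂ) + 1, m + (j:ℂ))
        = ∑ j ∈ Finset.range (k + 2),
        ((n + 1) * ((k.factorial:ℂ) *
          (cchoose (m + (j:ℂ)) j *
            ∑ b ∈ Finset.range (k + 1), ((cjb j b : ℚ):ℂ) * cchoose (n + (k:ℂ) + 1) (k - b)))) •
          f (n + (k:ℂ) + 1, m + (j:ℂ)) := by
      rw [Finset.sum_range_succ (n := k+1)]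
      have h0 : ∑ b ∈ Finset.range (k + 1),
          ((cjb (k+1) b : ℚ):ℂ) * cchoose (n + (k:ℂ) + 1) (k - b) = 0 := by
        refine Finset.sum_eq_zero (fun b hb => ?_)
        have hb' := Finset.mem_range.mp hb
        rw [cjb_eq_zero_of_lt (by omega : b < k+1)]
        simp
      rw [h0]
      simp
    have hshift : ∑ j ∈ Finset.range (k + 1),
        ((m + 1) * ((k.factorial:ℂ) *
          (cchoose (m + (j:ℂ) + 1) j *
            ∑ b ∈ Finset.range (k + 1), ((cjb j b : ℚ):ℂ) * cchoose (n + (k:ℂ) + 1) (k - b)))) •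
          f (n + (k:ℂ) + 1, m + (j:ℂ) + 1)
        = ∑ j ∈ Finset.range (k + 2),
        ((j:ℂ) * ((k.factorial:ℂ) *
          (cchoose (m + (j:ℂ)) j *
            ∑ b ∈ Finset.range (k + 1), ((cjb (j-1) b : ℚ):ℂ) * cchoose (n + (k:ℂ) + 1) (k - b)))) •
          f (n + (k:ℂ) + 1, m + (j:ℂ)) := by
      rw [Finset.sum_range_succ' _ (k+1)]
      simp only [Nat.cast_zero, zero_mul, zero_smul, add_zero, Nat.add_sub_cancel, Nat.cast_add,
        Nat.cast_one]
      refine Finset.sum_congr rfl (fun j hj => ?_)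
      have hcc : ((j:ℂ)+1) * cchoose (m + (j:ℂ) + 1) (j+1)
          = (m + 1) * cchoose (m + (j:ℂ) + 1) j := by
        rw [cchoose_succ (m + (j:ℂ) + 1) j]
        ring_nf
      have harg : (m + ((j:ℂ) + 1)) = m + (j:ℂ) + 1 := by ring
      rw [harg]
      rw [show ((m + 1) * ((k.factorial:ℂ) *
          (cchoose (m + (j:ℂ) + 1) j *
            ∑ b ∈ Finset.range (k + 1), ((cjb j b : ℚ):ℂ) * cchoose (n + (k:ℂ) + 1) (k - b))))
          = ((m+1) * cchoose (m + (j:ℂ) + 1) j) * ((k.factorial:ℂ) *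
            ∑ b ∈ Finset.range (k + 1), ((cjb j b : ℚ):ℂ) * cchoose (n + (k:ℂ) + 1) (k - b))
          from by ring, ← hcc]
      ring_nf
    rw [hext, hshift, ← Finset.sum_add_distrib]
    refine Finset.sum_congr rfl (fun j hj => ?_)
    rw [← add_smul]
    congr 1
    have hk : (((k+1).factorial : ℕ) : ℂ) = ((k:ℂ)+1) * ((k.factorial : ℕ) : ℂ) := by
      rw [Nat.factorial_succ]
      push_cast
      ring
    rw [hk]
    have hkey := key k j n
    linear_combination (-((k.factorial : ℂ) * cchoose (m + (j:ℂ)) j)) * hkey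

/-- Taylor's theorem for logarithmic formal series, `e^{y d/dx} f(x) = f(x+y)`, in
coefficient form: `(D^k f)(n,m)` equals `k!` times the coefficient of
`xⁿ (log x)ᵐ yᵏ` in the expansion of `f(x+y)`. -/
theorem log_taylor_theorem (W : Type*) [AddCommGroup W] [Module ℂ W]
    (f : ℂ × ℂ → W) (k : ℕ) (n m : ℂ) :
    (Dop W)^[k] f (n, m) =
      k.factorial •
        ∑ j ∈ Finset.range (k + 1), ∑ b ∈ Finset.Icc j k,
          (cchoose (m + (j : ℂ)) j * ((cjb j b : ℚ) : ℂ) * cchoose (n + (k : ℂ)) (k - b)) •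
            f (n + (k : ℂ), m + (j : ℂ)) := by
  rw [log_taylor_range W f k n m]
  congr 1
  refine Finset.sum_congr rfl (fun j hj => ?_)
  have hsub : Finset.Icc j k ⊆ Finset.range (k+1) := by
    intro b hb
    rw [Finset.mem_range]
    have := (Finset.mem_Icc.mp hb).2
    omega
  rw [Finset.sum_subset hsub (fun b hb hnb => by
    have hb' := Finset.mem_range.mp hb
    have : b < j := by
      by_contra hc
      exact hnb (Finset.mem_Icc.mpr ⟨by omega, by omega⟩)
    rw [cjb_eq_zero_of_lt this]
    simp)]
  rw [Finset.mul_sum, Finset.sum_smul]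
  refine Finset.sum_congr rfl (fun b hb => ?_)
  rw [mul_assoc]
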